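/- Every loopless multigraph G admits a proper edge-coloring with Δ(G) + μ(G) colors, where μ(G) is the maximum edge multiplicity. -/

import Mathlib

set_option linter.unusedSectionVars false

namespace MGColor

open Finset

variable {V : Type} [Fintype V] [DecidableEq V]

section
variable {k : ℕ}

/-- number of colors joining `u` to `v` in partial coloring `f` -/
def cnt (f : Fin k → V → Option V) (u v : V) : ℕ :=
  ∑ i, if f i u = some v then 1 else 0

variable (w : V → V → ℕ)

structure Inv (f : Fin k → V → Option V) : Prop where
  symm : ∀ i u v, f i u = some v → f i v = some u
  le : ∀ u v, cnt f u v ≤ w u v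

def Ndef (f : Fin k → V → Option V) : ℕ :=
  ∑ p ∈ Finset.univ ×ˢ (Finset.univ : Finset V), (w p.1 p.2 - cnt f p.1 p.2)

variable {w}

lemma one_le_cnt {f : Fin k → V → Option V} {i : Fin k} {u v : V} (h : f i u = some v) :
    1 ≤ cnt f u v := by
  classical
  have : (if f i u = some v then 1 else 0) ≤ cnt f u v :=
    Finset.single_le_sum (f := fun j => if f j u = some v then (1:ℕ) else 0)
      (fun _ _ => by positivity) (mem_univ i)
  simpa [h] using this

lemma Inv.irrefl (hloop : ∀ v, w v v = 0) {f : Fin k → V → Option V} (hf : Inv w f)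
    (i : Fin k) (u : V) : f i u ≠ some u := by
  intro h
  have h1 := one_le_cnt h
  have h2 := hf.le u u
  rw [hloop] at h2
  omega

lemma cnt_symm {f : Fin k → V → Option V} (hs : ∀ i u v, f i u = some v → f i v = some u)
    (u v : V) : cnt f u v = cnt f v u := by
  unfold cnt
  refine Finset.sum_congr rfl fun i _ => ?_
  by_cases h : f i u = some v
  · simp [h, hs i u v h]
  · have h2 : f i v ≠ some u := fun hh => h (hs i v u hh)
    simp [h, h2]

lemma cnt_card (f : Fin k → V → Option V) (u v : V) :
    cnt f u v = (univ.filter fun i => f i u = some v).card := by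
  rw [cnt, Finset.card_filter]

/-- partition of colors at a vertex -/
lemma missing_card (f : Fin k → V → Option V) (hs : ∀ i u v, f i u = some v → f i v = some u)
    (x : V) : (univ.filter fun i => f i x = none).card + ∑ y, cnt f x y = k := by
  classical
  have h1 : ∑ y, cnt f x y = ∑ i : Fin k, (if f i x = none then 0 else 1) := by
    unfold cnt
    rw [Finset.sum_comm]
    refine Finset.sum_congr rfl fun i _ => ?_
    cases h : f i x with
    | none => simp
    | some z => simp [Finset.sum_ite_eq' univ z (fun _ => (1:ℕ))]
  rw [h1, Finset.card_filter, ← Finset.sum_add_distrib]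
  have : ∀ i : Fin k, ((if f i x = none then (1:ℕ) else 0) + (if f i x = none then 0 else 1)) = 1 := by
    intro i; by_cases h : f i x = none <;> simp [h]
  simp [this]

lemma Ndef_eq_of_cnt_eq {f f' : Fin k → V → Option V}
    (h : ∀ p q, cnt f' p q = cnt f p q) : Ndef w f' = Ndef w f := by
  unfold Ndef; exact Finset.sum_congr rfl fun p _ => by rw [h]

lemma cnt_split2 (f : Fin k → V → Option V) (α c : Fin k) (hne : α ≠ c) (p q : V) :
    cnt f p q = (∑ i ∈ (univ.erase α).erase c, if f i p = some q then 1 else 0) +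
      ((if f α p = some q then 1 else 0) + (if f c p = some q then 1 else 0)) := by
  have hc : c ∈ univ.erase α := by simp [hne.symm]
  rw [cnt, ← Finset.sum_erase_add _ _ (mem_univ α), ← Finset.sum_erase_add _ _ hc]
  ring

lemma cnt_eq_two {f f' : Fin k → V → Option V} {α c : Fin k} (hne : α ≠ c)
    (hoth : ∀ i, i ≠ α → i ≠ c → f' i = f i) (p q : V)
    (h2 : ((if f' α p = some q then 1 else 0) + if f' c p = some q then (1:ℕ) else 0)
        = ((if f α p = some q then 1 else 0) + if f c p = some q then 1 else 0)) :
    cnt f' p q = cnt f p q := by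
  rw [cnt_split2 f' α c hne p q, cnt_split2 f α c hne p q, h2]
  congr 1
  refine Finset.sum_congr rfl fun i hi => ?_
  simp only [Finset.mem_erase] at hi
  rw [hoth i hi.2.1 hi.1]

end
section ops
variable {k : ℕ} {w : V → V → ℕ}

lemma cnt_split1 (f : Fin k → V → Option V) (α : Fin k) (p q : V) :
    cnt f p q = (∑ i ∈ univ.erase α, if f i p = some q then 1 else 0) +
      (if f α p = some q then 1 else 0) := by
  rw [cnt, ← Finset.sum_erase_add _ _ (mem_univ α)]

/-- move the edge `(u,y)` from color class `c` to the (free) color class `α` -/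
def recolorFn (f : Fin k → V → Option V) (α c : Fin k) (u y : V) : Fin k → V → Option V :=
  fun i x => if i = α then (if x = u then some y else if x = y then some u else f α x)
    else if i = c then (if x = u ∨ x = y then none else f c x) else f i x

lemma recolor_spec {f : Fin k → V → Option V} (hf : Inv w f) {α c : Fin k} {u y : V}
    (hαu : f α u = none) (hαy : f α y = none) (hcu : f c u = some y) (huy : u ≠ y) :
    Inv w (recolorFn f α c u y) ∧ (∀ p q, cnt (recolorFn f α c u y) p q = cnt f p q) := by
  have hαc : α ≠ c := by
    intro h; rw [h, hcu] at hαu; exact absurd hαu (by simp)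
  have hcα : c ≠ α := hαc.symm
  have hcy : f c y = some u := hf.symm _ _ _ hcu
  have hyu : y ≠ u := huy.symm
  have hcnt : ∀ p q, cnt (recolorFn f α c u y) p q = cnt f p q := by
    intro p q
    refine cnt_eq_two hαc (fun i hiα hic => ?_) p q ?_
    · funext x; simp [recolorFn, hiα, hic]
    · by_cases hpu : p = u
      · rw [hpu]
        simp [recolorFn, hcα, hαu, hcu, Nat.add_comm]
      · by_cases hpy : p = y
        · rw [hpy]
          simp [recolorFn, hcα, hαy, hcy, hyu, Nat.add_comm]
        · simp [recolorFn, hcα, hpu, hpy]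
  refine ⟨⟨?_, fun p q => (hcnt p q).le.trans (hf.le p q)⟩, hcnt⟩
  intro i p q hpq
  by_cases hiα : i = α
  · rw [hiα] at hpq ⊢
    simp only [recolorFn, if_pos rfl] at hpq ⊢
    rw [if_pos trivial] at hpq ⊢
    by_cases hpu : p = u
    · rw [if_pos hpu] at hpq
      have hq : y = q := Option.some.inj hpq
      rw [← hq, if_neg hyu, if_pos rfl, hpu]
    · by_cases hpy : p = y
      · rw [if_neg hpu, if_pos hpy] at hpq
        have hq : u = q := Option.some.inj hpq
        rw [← hq, if_pos rfl, hpy]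
      · rw [if_neg hpu, if_neg hpy] at hpq
        have hq := hf.symm _ _ _ hpq
        have hqu : q ≠ u := by intro h; rw [h, hαu] at hq; exact absurd hq (by simp)
        have hqy : q ≠ y := by intro h; rw [h, hαy] at hq; exact absurd hq (by simp)
        rw [if_neg hqu, if_neg hqy]; exact hq
  · by_cases hic : i = c
    · rw [hic] at hpq ⊢
      simp only [recolorFn, if_neg hcα, if_pos rfl] at hpq ⊢
      rw [if_pos trivial] at hpq ⊢
      by_cases hp : p = u ∨ p = y
      · rw [if_pos hp] at hpq; exact absurd hpq (by simp)
      · rw [if_neg hp] at hpq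
        push_neg at hp
        have hq := hf.symm _ _ _ hpq
        have hqu : q ≠ u := by
          intro h; rw [h, hcu] at hq; exact hp.2 (Option.some.inj hq).symm
        have hqy : q ≠ y := by
          intro h; rw [h, hcy] at hq; exact hp.1 (Option.some.inj hq).symm
        have : ¬ (q = u ∨ q = y) := by tauto
        rw [if_neg this]; exact hq
    · simp only [recolorFn, if_neg hiα, if_neg hic] at hpq ⊢
      exact hf.symm _ _ _ hpq

/-- color the free slot `(u,y)` with free color `α` -/
def colorFn (f : Fin k → V → Option V) (α : Fin k) (u y : V) : Fin k → V → Option V :=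
  fun i x => if i = α then (if x = u then some y else if x = y then some u else f α x) else f i x

lemma color_spec (hwsymm : ∀ a b, w a b = w b a) {f : Fin k → V → Option V} (hf : Inv w f)
    {α : Fin k} {u y : V}
    (hαu : f α u = none) (hαy : f α y = none) (huy : u ≠ y) (hslot : cnt f u y < w u y) :
    Inv w (colorFn f α u y) ∧ Ndef w (colorFn f α u y) < Ndef w f := by
  have hyu : y ≠ u := huy.symm
  have hcnt : ∀ p q, cnt (colorFn f α u y) p q =
      cnt f p q + (if (p = u ∧ q = y) ∨ (p = y ∧ q = u) then 1 else 0) := by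
    intro p q
    rw [cnt_split1 (colorFn f α u y) α p q, cnt_split1 f α p q]
    have hrest : (∑ i ∈ univ.erase α, if colorFn f α u y i p = some q then (1:ℕ) else 0) =
        ∑ i ∈ univ.erase α, if f i p = some q then 1 else 0 := by
      refine Finset.sum_congr rfl fun i hi => ?_
      simp only [Finset.mem_erase] at hi
      simp [colorFn, hi.1]
    rw [hrest]
    by_cases hpu : p = u
    · rw [hpu]
      by_cases hqy : q = y
      · rw [hqy]
        simp [colorFn, hαu, huy]
      · have h2 : (some y : Option V) ≠ some q := by
          intro h; exact hqy (Option.some.inj h).symm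
        simp [colorFn, hαu, h2, hqy, fun h : u = y => huy h]
    · by_cases hpy : p = y
      · rw [hpy]
        by_cases hqu : q = u
        · rw [hqu]
          simp [colorFn, hαy, hyu]
        · have h2 : (some u : Option V) ≠ some q := by
            intro h; exact hqu (Option.some.inj h).symm
          simp [colorFn, hαy, h2, hqu, hyu, fun h : y = u => hyu h]
      · simp [colorFn, hpu, hpy]
  have hsy : ∀ i p q, colorFn f α u y i p = some q → colorFn f α u y i q = some p := by
    intro i p q hpq
    by_cases hiα : i = α
    · rw [hiα] at hpq ⊢
      simp only [colorFn, if_pos rfl] at hpq ⊢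
      rw [if_pos trivial] at hpq ⊢
      by_cases hpu : p = u
      · rw [if_pos hpu] at hpq
        have hq : y = q := Option.some.inj hpq
        rw [← hq, if_neg hyu, if_pos rfl, hpu]
      · by_cases hpy : p = y
        · rw [if_neg hpu, if_pos hpy] at hpq
          have hq : u = q := Option.some.inj hpq
          rw [← hq, if_pos rfl, hpy]
        · rw [if_neg hpu, if_neg hpy] at hpq
          have hq := hf.symm _ _ _ hpq
          have hqu : q ≠ u := by intro h; rw [h, hαu] at hq; exact absurd hq (by simp)
          have hqy : q ≠ y := by intro h; rw [h, hαy] at hq; exact absurd hq (by simp)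
          rw [if_neg hqu, if_neg hqy]; exact hq
    · simp only [colorFn, if_neg hiα] at hpq ⊢
      exact hf.symm _ _ _ hpq
  have hle : ∀ p q, cnt (colorFn f α u y) p q ≤ w p q := by
    intro p q
    rw [hcnt]
    by_cases h : (p = u ∧ q = y) ∨ (p = y ∧ q = u)
    · rcases h with ⟨h1, h2⟩ | ⟨h1, h2⟩
      · rw [h1, h2, if_pos (Or.inl ⟨rfl, rfl⟩)]
        omega
      · rw [h1, h2, if_pos (Or.inr ⟨rfl, rfl⟩)]
        have hc : cnt f y u = cnt f u y := cnt_symm hf.symm y u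
        rw [hc, hwsymm y u]
        omega
    · rw [if_neg h]
      simpa using hf.le p q
  refine ⟨⟨hsy, hle⟩, ?_⟩
  unfold Ndef
  refine Finset.sum_lt_sum (f := fun p : V × V => w p.1 p.2 - cnt (colorFn f α u y) p.1 p.2)
    (g := fun p : V × V => w p.1 p.2 - cnt f p.1 p.2) (fun p _ => ?_) ?_
  · rw [hcnt]; omega
  · refine ⟨(u, y), by simp, ?_⟩
    dsimp only
    rw [hcnt u y, if_pos (Or.inl ⟨rfl, rfl⟩)]
    omega

/-- Kempe swap of colors `α, β` on the closed set `C` -/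
def swapFn (f : Fin k → V → Option V) (α β : Fin k) (C : V → Prop) [DecidablePred C] :
    Fin k → V → Option V :=
  fun i x => if i = α then (if C x then f β x else f α x)
    else if i = β then (if C x then f α x else f β x) else f i x

lemma swap_spec {f : Fin k → V → Option V} (hf : Inv w f) {α β : Fin k} {C : V → Prop}
    [DecidablePred C] (hαβ : α ≠ β)
    (hcl : ∀ x y, C x → (f α x = some y ∨ f β x = some y) → C y) :
    Inv w (swapFn f α β C) ∧ (∀ p q, cnt (swapFn f α β C) p q = cnt f p q) := by
  have hβα : β ≠ α := hαβ.symm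
  have hcl' : ∀ x y, ¬ C x → (f α x = some y ∨ f β x = some y) → ¬ C y := by
    intro x y hx hxy hy
    refine hx (hcl y x hy ?_)
    rcases hxy with h | h
    · exact Or.inl (hf.symm _ _ _ h)
    · exact Or.inr (hf.symm _ _ _ h)
  have hcnt : ∀ p q, cnt (swapFn f α β C) p q = cnt f p q := by
    intro p q
    refine cnt_eq_two hαβ (fun i hiα hiβ => ?_) p q ?_
    · funext x; simp [swapFn, hiα, hiβ]
    · by_cases hp : C p
      · simp [swapFn, hβα, hp, Nat.add_comm]
      · simp [swapFn, hβα, hp]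
  refine ⟨⟨?_, fun p q => (hcnt p q).le.trans (hf.le p q)⟩, hcnt⟩
  intro i p q hpq
  by_cases hiα : i = α
  · rw [hiα] at hpq ⊢
    simp only [swapFn, if_pos rfl] at hpq ⊢
    rw [if_pos trivial] at hpq ⊢
    by_cases hp : C p
    · rw [if_pos hp] at hpq
      rw [if_pos (hcl p q hp (Or.inr hpq))]
      exact hf.symm _ _ _ hpq
    · rw [if_neg hp] at hpq
      rw [if_neg (hcl' p q hp (Or.inl hpq))]
      exact hf.symm _ _ _ hpq
  · by_cases hiβ : i = β
    · rw [hiβ] at hpq ⊢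
      simp only [swapFn, if_neg hβα, if_pos rfl] at hpq ⊢
      rw [if_pos trivial] at hpq ⊢
      by_cases hp : C p
      · rw [if_pos hp] at hpq
        rw [if_pos (hcl p q hp (Or.inl hpq))]
        exact hf.symm _ _ _ hpq
      · rw [if_neg hp] at hpq
        rw [if_neg (hcl' p q hp (Or.inr hpq))]
        exact hf.symm _ _ _ hpq
    · simp only [swapFn, if_neg hiα, if_neg hiβ] at hpq ⊢
      exact hf.symm _ _ _ hpq

end ops
section reach
variable {k : ℕ} {w : V → V → ℕ}

/-- `Reach w f u L y`: the free slot at `(u, vs 0)` can be rotated along the chain `L`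
to make a free slot at `(u, y)`. -/
def Reach (w : V → V → ℕ) (f : Fin k → V → Option V) (u : V) :
    List (Fin k × V) → V → Prop
  | [], y => cnt f u y < w u y
  | (c, z) :: L, y => f c u = some y ∧ f c z = none ∧ Reach w f u L z

lemma reach_congr {f f' : Fin k → V → Option V} {u : V} :
    ∀ (L : List (Fin k × V)) (y : V), (∀ d ∈ L.map Prod.fst, f' d = f d) →
      (∀ y', cnt f' u y' = cnt f u y') → Reach w f u L y → Reach w f' u L y := by
  intro L
  induction L with
  | nil =>
    intro y _ hc hR
    have h1 : cnt f u y < w u y := hR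
    have h2 := hc y
    exact show cnt f' u y < w u y by omega
  | cons hd L ih =>
    obtain ⟨c, z⟩ := hd
    intro y hcl hc hR
    obtain ⟨h1, h2, h3⟩ := hR
    have hcc : f' c = f c := hcl c (by simp)
    exact ⟨hcc ▸ h1, hcc ▸ h2, ih z (fun d hd => hcl d (by simp [hd])) hc h3⟩

lemma reach_colors_ne {f : Fin k → V → Option V} {u : V} {α : Fin k} (hαu : f α u = none) :
    ∀ (L : List (Fin k × V)) (y : V), Reach w f u L y → α ∉ L.map Prod.fst := by
  intro L
  induction L with
  | nil => intro y _; simp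
  | cons hd L ih =>
    obtain ⟨c, z⟩ := hd
    intro y hR
    obtain ⟨h1, _, h3⟩ := hR
    simp only [List.map_cons, List.mem_cons, not_or]
    refine ⟨?_, by simpa using ih z h3⟩
    intro h; rw [← h, hαu] at h1; exact absurd h1 (by simp)

lemma rot (hwsymm : ∀ a b, w a b = w b a) (hloop : ∀ v, w v v = 0) :
    ∀ (L : List (Fin k × V)) (f : Fin k → V → Option V), Inv w f → ∀ (u y : V) (α : Fin k),
      f α u = none → f α y = none → (L.map Prod.fst).Nodup →
      Reach w f u L y → ∃ f' : Fin k → V → Option V, Inv w f' ∧ Ndef w f' < Ndef w f := by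
  intro L
  induction L with
  | nil =>
    intro f hf u y α hαu hαy _ hR
    have hR' : cnt f u y < w u y := hR
    have huy : u ≠ y := by
      intro h; rw [h, hloop] at hR'; omega
    obtain ⟨h1, h2⟩ := color_spec hwsymm hf hαu hαy huy hR'
    exact ⟨_, h1, h2⟩
  | cons hd L ih =>
    obtain ⟨c, z⟩ := hd
    intro f hf u y α hαu hαy hnd hR
    obtain ⟨hcu, hcz, hR'⟩ := hR
    have hcα : c ≠ α := by
      intro h; rw [h, hαu] at hcu; exact absurd hcu (by simp)
    have huy : u ≠ y := by
      intro h; rw [← h] at hcu; exact hf.irrefl hloop c u hcu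
    obtain ⟨hf₁, hcnt₁⟩ := recolor_spec hf hαu hαy hcu huy
    have hzu : z ≠ u := by intro h; rw [h, hcu] at hcz; exact absurd hcz (by simp)
    have hcy : f c y = some u := hf.symm _ _ _ hcu
    have hzy : z ≠ y := by intro h; rw [h, hcy] at hcz; exact absurd hcz (by simp)
    have hcu1 : recolorFn f α c u y c u = none := by
      simp [recolorFn, hcα]
    have hcz1 : recolorFn f α c u y c z = none := by
      simp [recolorFn, hcα, hzu, hzy, hcz]
    have hαtail : α ∉ (((c, z) :: L).map Prod.fst) := reach_colors_ne hαu _ y ⟨hcu, hcz, hR'⟩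
    have hαL : α ∉ L.map Prod.fst := by
      simp only [List.map_cons, List.mem_cons, not_or] at hαtail; exact hαtail.2
    have hnd' : (c :: L.map Prod.fst).Nodup := by simpa using hnd
    have hcL : c ∉ L.map Prod.fst := (List.nodup_cons.mp hnd').1
    have hR₁ : Reach w (recolorFn f α c u y) u L z := by
      refine reach_congr L z (fun d hd => ?_) (fun y' => hcnt₁ u y') hR'
      have hdα : d ≠ α := fun h => hαL (h ▸ hd)
      have hdc : d ≠ c := fun h => hcL (h ▸ hd)
      funext x; simp [recolorFn, hdα, hdc]
    obtain ⟨f', hf', hN⟩ := ih (recolorFn f α c u y) hf₁ u z c hcu1 hcz1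
      (List.nodup_cons.mp hnd').2 hR₁
    exact ⟨f', hf', hN.trans_eq (Ndef_eq_of_cnt_eq hcnt₁)⟩

end reach
section walk
variable {k : ℕ}

def col (c₀ c₁ : Fin k) (n : ℕ) : Fin k := if n % 2 = 0 then c₀ else c₁

def walk (f : Fin k → V → Option V) (c₀ c₁ : Fin k) (s : V) : ℕ → Option V
  | 0 => some s
  | n+1 => (walk f c₀ c₁ s n).bind (f (col c₀ c₁ n))

variable {f : Fin k → V → Option V} {c₀ c₁ : Fin k} {s : V}

lemma col_parity {m n : ℕ} (h : m % 2 = n % 2) : col c₀ c₁ m = col c₀ c₁ n := by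
  unfold col; rw [h]

lemma col_mem (n : ℕ) : col c₀ c₁ n = c₀ ∨ col c₀ c₁ n = c₁ := by
  unfold col; split <;> simp

lemma col_ne_of_parity (hne : c₀ ≠ c₁) {m n : ℕ} (h : m % 2 ≠ n % 2) :
    col c₀ c₁ m ≠ col c₀ c₁ n := by
  unfold col
  rcases Nat.mod_two_eq_zero_or_one m with hm | hm <;>
    rcases Nat.mod_two_eq_zero_or_one n with hn | hn <;>
      rw [hm, hn] at h ⊢ <;> simp_all <;> omega

lemma other_col (hne : c₀ ≠ c₁) (n : ℕ) {a : Fin k} (h1 : a = c₀ ∨ a = c₁)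
    (h2 : a ≠ col c₀ c₁ n) : a = col c₀ c₁ (n+1) := by
  unfold col at *
  rcases Nat.mod_two_eq_zero_or_one n with hn | hn
  · have h3 : (n+1) % 2 = 1 := by omega
    rw [hn] at h2; rw [h3]
    simp at h2 ⊢
    tauto
  · have h3 : (n+1) % 2 = 0 := by omega
    rw [hn] at h2; rw [h3]
    simp at h2 ⊢
    tauto

lemma walk_zero : walk f c₀ c₁ s 0 = some s := rfl

lemma walk_succ (n : ℕ) :
    walk f c₀ c₁ s (n+1) = (walk f c₀ c₁ s n).bind (f (col c₀ c₁ n)) := rfl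

lemma walk_none_succ {n : ℕ} (h : walk f c₀ c₁ s n = none) :
    walk f c₀ c₁ s (n+1) = none := by rw [walk_succ, h]; rfl

lemma walk_none_le {m n : ℕ} (hmn : m ≤ n) (h : walk f c₀ c₁ s m = none) :
    walk f c₀ c₁ s n = none := by
  induction n with
  | zero => rw [Nat.le_zero.mp hmn] at h; exact h
  | succ n ih =>
    rcases Nat.lt_or_ge m (n+1) with h1 | h1
    · exact walk_none_succ (ih (by omega))
    · have : m = n + 1 := by omega
      exact this ▸ h

lemma walk_some_le {n : ℕ} {x : V} (h : walk f c₀ c₁ s n = some x) {m : ℕ} (hmn : m ≤ n) :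
    ∃ z, walk f c₀ c₁ s m = some z := by
  cases hm : walk f c₀ c₁ s m with
  | none => rw [walk_none_le hmn hm] at h; exact absurd h (by simp)
  | some z => exact ⟨z, rfl⟩

lemma walk_step {n : ℕ} {y : V} (h : walk f c₀ c₁ s (n+1) = some y) :
    ∃ x, walk f c₀ c₁ s n = some x ∧ f (col c₀ c₁ n) x = some y := by
  rw [walk_succ] at h
  cases hn : walk f c₀ c₁ s n with
  | none => rw [hn] at h; exact absurd h (by simp)
  | some x => rw [hn] at h; exact ⟨x, rfl, h⟩

lemma walk_step' {n : ℕ} {x y : V} (hx : walk f c₀ c₁ s n = some x)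
    (hy : walk f c₀ c₁ s (n+1) = some y) : f (col c₀ c₁ n) x = some y := by
  obtain ⟨x', hx', he⟩ := walk_step hy
  rw [hx] at hx'
  exact (Option.some.inj hx') ▸ he

lemma walk_inj (hsym : ∀ i u v, f i u = some v → f i v = some u)
    (hirr : ∀ i x, f i x ≠ some x) (hne : c₀ ≠ c₁) (hs : f c₁ s = none) :
    ∀ b a x, a < b → walk f c₀ c₁ s a = some x → walk f c₀ c₁ s b = some x → False := by
  intro b
  induction b using Nat.strong_induction_on with
  | _ b IH =>
    intro a x hab ha hb
    match b, hab with
    | b'+1, hab =>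
    obtain ⟨pb, hpb, heb⟩ := walk_step hb
    have hxb : f (col c₀ c₁ b') x = some pb := hsym _ _ _ heb
    match a with
    | 0 =>
      have hsx : s = x := by rw [walk_zero] at ha; exact Option.some.inj ha
      subst hsx
      have hcb : col c₀ c₁ b' = c₀ := by
        rcases col_mem (c₀ := c₀) (c₁ := c₁) b' with h | h
        · exact h
        · rw [h, hs] at hxb; exact absurd hxb (by simp)
      have hb2 : b' % 2 = 0 := by
        by_contra hh
        have : col c₀ c₁ b' = c₁ := by unfold col; rw [if_neg hh]
        rw [this] at hcb; exact hne hcb.symm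
      have hw1 : walk f c₀ c₁ s 1 = some pb := by
        rw [walk_succ, walk_zero]
        show f (col c₀ c₁ 0) s = some pb
        have : col c₀ c₁ 0 = c₀ := by unfold col; simp
        rw [this, ← hcb]; exact hxb
      match b' with
      | 0 =>
        rw [walk_zero] at hpb
        have : s = pb := Option.some.inj hpb
        rw [← this] at heb
        have : col c₀ c₁ 0 = c₀ := by unfold col; simp
        exact hirr _ _ heb
      | 1 => omega
      | (b''+2) =>
        exact IH (b''+2) (by omega) 1 pb (by omega) hw1 hpb
    | a'+1 =>
      obtain ⟨pa, hpa, hea⟩ := walk_step ha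
      have hxa : f (col c₀ c₁ a') x = some pa := hsym _ _ _ hea
      by_cases hcc : col c₀ c₁ a' = col c₀ c₁ b'
      · rw [hcc, hxb] at hxa
        have : pb = pa := Option.some.inj hxa
        rw [this] at hpb
        exact IH b' (by omega) a' pa (by omega) hpa hpb
      · have hpar : a' % 2 ≠ b' % 2 := by
          intro h; exact hcc (col_parity h)
        rcases Nat.lt_or_ge (a'+2) (b'+1) with hlt | hge
        · -- a+1 < b
          obtain ⟨q, hq⟩ := walk_some_le hpb (show a'+2 ≤ b' by omega)
          have heq : f (col c₀ c₁ (a'+1)) x = some q := walk_step' ha hq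
          have hca : col c₀ c₁ (a'+1) = col c₀ c₁ b' := col_parity (by omega)
          rw [hca, hxb] at heq
          have : pb = q := Option.some.inj heq
          rw [← this] at hq
          have hne2 : a' + 2 ≠ b' := by
            intro h
            have : (a'+2) % 2 = b' % 2 := by rw [h]
            omega
          exact IH b' (by omega) (a'+2) pb (by omega) hq hpb
        · -- a+1 = b
          have : a' + 2 = b' + 1 := by omega
          rw [← this] at hb
          have := walk_step' ha hb
          have hca : col c₀ c₁ (a'+1) = col c₀ c₁ b' := col_parity (by omega)
          exact hirr _ _ this

lemma walk_exists_none (hsym : ∀ i u v, f i u = some v → f i v = some u)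
    (hirr : ∀ i x, f i x ≠ some x) (hne : c₀ ≠ c₁) (hs : f c₁ s = none) :
    ∃ n, walk f c₀ c₁ s n = none := by
  by_contra h
  push_neg at h
  have hg : ∀ n, ∃ x, walk f c₀ c₁ s n = some x := by
    intro n
    cases hn : walk f c₀ c₁ s n with
    | none => exact absurd hn (h n)
    | some x => exact ⟨x, rfl⟩
  choose g hgspec using hg
  obtain ⟨a, b, hab, heq⟩ := Finite.exists_ne_map_eq_of_infinite g
  rcases Nat.lt_or_ge a b with h1 | h1
  · exact walk_inj hsym hirr hne hs b a (g a) h1 (hgspec a) (heq ▸ hgspec b)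
  · have h2 : b < a := by omega
    exact walk_inj hsym hirr hne hs a b (g b) h2 (hgspec b) (heq ▸ hgspec a)

lemma walk_term (hsym : ∀ i u v, f i u = some v → f i v = some u)
    (hirr : ∀ i x, f i x ≠ some x) (hne : c₀ ≠ c₁) (hs : f c₁ s = none) :
    ∃ N T, walk f c₀ c₁ s N = some T ∧ walk f c₀ c₁ s (N+1) = none := by
  classical
  have hex := walk_exists_none hsym hirr hne hs
  have h0 : walk f c₀ c₁ s 0 ≠ none := by rw [walk_zero]; simp
  have hspec := Nat.find_spec hex
  have hpos : Nat.find hex ≠ 0 := by intro h; rw [h] at hspec; exact h0 hspec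
  obtain ⟨N, hN⟩ : ∃ N, Nat.find hex = N + 1 := ⟨Nat.find hex - 1, by omega⟩
  have hmin : walk f c₀ c₁ s N ≠ none := Nat.find_min hex (by omega)
  rw [hN] at hspec
  cases hT : walk f c₀ c₁ s N with
  | none => exact absurd hT hmin
  | some T => exact ⟨N, T, hT, hspec⟩

lemma walk_mem_le {N : ℕ} (hN1 : walk f c₀ c₁ s (N+1) = none)
    {n : ℕ} {x : V} (h : walk f c₀ c₁ s n = some x) : n ≤ N := by
  by_contra hh
  rw [walk_none_le (show N+1 ≤ n by omega) hN1] at h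
  exact absurd h (by simp)

/-- the trace of the walk is closed under `c₀`- and `c₁`-partners -/
lemma walk_closed (hsym : ∀ i u v, f i u = some v → f i v = some u)
    (hne : c₀ ≠ c₁) (hs : f c₁ s = none)
    {N : ℕ} {T : V} (hT : walk f c₀ c₁ s N = some T) (hN1 : walk f c₀ c₁ s (N+1) = none)
    {x y : V} (hx : ∃ n, walk f c₀ c₁ s n = some x)
    (hxy : f c₀ x = some y ∨ f c₁ x = some y) : ∃ n, walk f c₀ c₁ s n = some y := by
  obtain ⟨n, hn⟩ := hx
  have hnN : n ≤ N := walk_mem_le hN1 hn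
  obtain ⟨c, hc, hcxy⟩ : ∃ c, (c = c₀ ∨ c = c₁) ∧ f c x = some y := by
    rcases hxy with h | h
    · exact ⟨c₀, Or.inl rfl, h⟩
    · exact ⟨c₁, Or.inr rfl, h⟩
  by_cases hcn : c = col c₀ c₁ n
  · rcases Nat.lt_or_ge n N with h1 | h1
    · obtain ⟨q, hq⟩ := walk_some_le hT (show n+1 ≤ N by omega)
      have := walk_step' hn hq
      rw [← hcn, hcxy] at this
      exact ⟨n+1, (Option.some.inj this) ▸ hq⟩
    · have hnN' : n = N := by omega
      rw [hnN'] at hn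
      rw [walk_succ, hT] at hN1
      have : f (col c₀ c₁ N) T = none := hN1
      have hxT : x = T := by rw [hn] at hT; exact Option.some.inj hT
      rw [← hxT, ← hnN', ← hcn, hcxy] at this
      exact absurd this (by simp)
  · match n, hn with
    | 0, hn =>
      have hxs : x = s := by rw [walk_zero] at hn; exact (Option.some.inj hn).symm
      have hc1 : c = c₁ := by
        rcases hc with rfl | rfl
        · exfalso; apply hcn; unfold col; simp
        · rfl
      rw [hc1, hxs, hs] at hcxy
      exact absurd hcxy (by simp)
    | n'+1, hn =>
      obtain ⟨p, hp, hep⟩ := walk_step hn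
      have hpx : f (col c₀ c₁ n') x = some p := hsym _ _ _ hep
      have : c = col c₀ c₁ (n'+1+1) := other_col hne (n'+1) hc hcn
      have hcn' : c = col c₀ c₁ n' := by
        rw [this]; exact col_parity (by omega)
      rw [hcn', hpx] at hcxy
      exact ⟨n', (Option.some.inj hcxy) ▸ hp⟩

/-- a deficient vertex in the trace other than the start is the terminal -/
lemma walk_lack (hsym : ∀ i u v, f i u = some v → f i v = some u)
    (hne : c₀ ≠ c₁)
    {N : ℕ} {T : V} (hT : walk f c₀ c₁ s N = some T) (hN1 : walk f c₀ c₁ s (N+1) = none)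
    {x : V} {d : Fin k} (hd : d = c₀ ∨ d = c₁) (hdx : f d x = none)
    (hx : ∃ n, walk f c₀ c₁ s n = some x) (hxs : x ≠ s) :
    x = T ∧ col c₀ c₁ N = d ∧ 1 ≤ N := by
  obtain ⟨n, hn⟩ := hx
  have hnN : n ≤ N := walk_mem_le hN1 hn
  match n, hn with
  | 0, hn =>
    exfalso
    have h1 : s = x := by rw [walk_zero] at hn; exact Option.some.inj hn
    exact hxs h1.symm
  | n'+1, hn =>
    obtain ⟨p, hp, hep⟩ := walk_step hn
    have hpx : f (col c₀ c₁ n') x = some p := hsym _ _ _ hep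
    have hdn' : d ≠ col c₀ c₁ n' := by
      intro h; rw [← h, hdx] at hpx; exact absurd hpx (by simp)
    have hdn : d = col c₀ c₁ (n'+1) := other_col hne n' hd hdn'
    rcases Nat.lt_or_ge (n'+1) N with h1 | h1
    · exfalso
      obtain ⟨q, hq⟩ := walk_some_le hT (show n'+2 ≤ N by omega)
      have := walk_step' hn hq
      rw [← hdn, hdx] at this
      exact absurd this (by simp)
    · have hnN' : n'+1 = N := by omega
      refine ⟨?_, by rw [← hnN', ← hdn], by omega⟩
      rw [hnN'] at hn
      rw [hn] at hT
      exact Option.some.inj hT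

/-- reversal of the walk -/
lemma walk_rev (hsym : ∀ i u v, f i u = some v → f i v = some u)
    {N : ℕ} {T : V} (hT : walk f c₀ c₁ s N = some T)
    {d₀ d₁ : Fin k} (hd₀ : d₀ = col c₀ c₁ (N+1)) (hd₁ : d₁ = col c₀ c₁ N) :
    ∀ m, m ≤ N → ∀ z, walk f c₀ c₁ s (N - m) = some z → walk f d₀ d₁ T m = some z := by
  intro m
  induction m with
  | zero =>
    intro _ z hz
    simp only [Nat.sub_zero] at hz
    rw [hz] at hT
    rw [walk_zero, Option.some.inj hT]
  | succ m ih =>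
    intro hm z hz
    obtain ⟨xm, hxm⟩ := walk_some_le hT (show N - m ≤ N by omega)
    have hNm : N - m = (N - (m+1)) + 1 := by omega
    have hstep0 : f (col c₀ c₁ (N - (m+1))) z = some xm :=
      walk_step' hz (by rw [← hNm]; exact hxm)
    have hstep : f (col c₀ c₁ (N - (m+1))) xm = some z := hsym _ _ _ hstep0
    have hcol : col d₀ d₁ m = col c₀ c₁ (N - (m+1)) := by
      rcases Nat.mod_two_eq_zero_or_one m with hm2 | hm2
      · have h1 : col d₀ d₁ m = d₀ := by unfold col; rw [if_pos hm2]
        rw [h1, hd₀]; exact col_parity (by omega)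
      · have h1 : col d₀ d₁ m = d₁ := by unfold col; rw [if_neg (by omega)]
        rw [h1, hd₁]; exact col_parity (by omega)
    rw [walk_succ, ih (by omega) xm hxm]
    simp only [Option.bind_some]
    rw [hcol]
    exact hstep

end walk
section walk2
variable {k : ℕ} {f : Fin k → V → Option V} {c₀ c₁ : Fin k}

/-- if `x` is in the trace of the walk from `s`, differs from `s` and also lacks `c₁`,
then the walk started from `x` has the same trace. -/
lemma trace_swap_start (hsym : ∀ i u v, f i u = some v → f i v = some u)
    (hirr : ∀ i x, f i x ≠ some x) (hne : c₀ ≠ c₁) {s x : V}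
    (hs : f c₁ s = none) (hx1 : f c₁ x = none)
    (hx : ∃ n, walk f c₀ c₁ s n = some x) (hxs : x ≠ s) :
    ∀ z, (∃ n, walk f c₀ c₁ x n = some z) ↔ (∃ n, walk f c₀ c₁ s n = some z) := by
  obtain ⟨N, T, hT, hN1⟩ := walk_term hsym hirr hne hs
  obtain ⟨hxT, hcolN, hN⟩ := walk_lack hsym hne hT hN1 (Or.inr rfl) hx1 hx hxs
  have hd₀ : c₀ = col c₀ c₁ (N+1) := by
    have h1 : col c₀ c₁ (N+1) ≠ col c₀ c₁ N := col_ne_of_parity hne (by omega)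
    rcases col_mem (c₀ := c₀) (c₁ := c₁) (N+1) with h | h
    · exact h.symm
    · exfalso; rw [hcolN] at h1; exact h1 h
  have hrev := walk_rev hsym hT hd₀ hcolN.symm
  rw [hxT]
  have hwxN : walk f c₀ c₁ T N = some s :=
    hrev N le_rfl s (by rw [Nat.sub_self]; exact walk_zero)
  have hwxN1 : walk f c₀ c₁ T (N+1) = none := by
    rw [walk_succ, hwxN]
    simp only [Option.bind_some]
    rw [hcolN]; exact hs
  intro z
  constructor
  · rintro ⟨m, hm⟩
    have hmN : m ≤ N := walk_mem_le hwxN1 hm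
    obtain ⟨z', hz'⟩ := walk_some_le hT (show N - m ≤ N by omega)
    have hh := hrev m hmN z' hz'
    rw [hm] at hh
    have hzz : z = z' := Option.some.inj hh
    exact ⟨N - m, by rw [hzz]; exact hz'⟩
  · rintro ⟨n, hn⟩
    have hnN : n ≤ N := walk_mem_le hN1 hn
    refine ⟨N - n, hrev (N - n) (by omega) z ?_⟩
    have h2 : N - (N - n) = n := by omega
    rw [h2]; exact hn

/-- a vertex lacking `c₀` can be walk-reached (nontrivially) from at most one
`c₁`-lacking start -/
lemma term_unique (hsym : ∀ i u v, f i u = some v → f i v = some u)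
    (hirr : ∀ i x, f i x ≠ some x) (hne : c₀ ≠ c₁) {s₁ s₂ u : V}
    (hs₁ : f c₁ s₁ = none) (hs₂ : f c₁ s₂ = none) (hu : f c₀ u = none)
    (h1 : ∃ n, walk f c₀ c₁ s₁ n = some u) (h2 : ∃ n, walk f c₀ c₁ s₂ n = some u)
    (hu1 : u ≠ s₁) (hu2 : u ≠ s₂) : s₁ = s₂ := by
  have key : ∀ s : V, f c₁ s = none → (∃ n, walk f c₀ c₁ s n = some u) → u ≠ s →
      ∃ N, walk f c₁ c₀ u N = some s ∧ walk f c₁ c₀ u (N+1) = none := by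
    intro s hs hx hxs
    obtain ⟨N, T, hT, hN1⟩ := walk_term hsym hirr hne hs
    obtain ⟨hxT, hcolN, hN⟩ := walk_lack hsym hne hT hN1 (Or.inl rfl) hu hx hxs
    have hd₀ : c₁ = col c₀ c₁ (N+1) := by
      have hx1 : col c₀ c₁ (N+1) ≠ col c₀ c₁ N := col_ne_of_parity hne (by omega)
      rcases col_mem (c₀ := c₀) (c₁ := c₁) (N+1) with h | h
      · exfalso; rw [hcolN] at hx1; exact hx1 h
      · exact h.symm
    have hrev := walk_rev hsym hT hd₀ hcolN.symm
    have hwN : walk f c₁ c₀ T N = some s :=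
      hrev N le_rfl s (by rw [Nat.sub_self]; exact walk_zero)
    have hwN1 : walk f c₁ c₀ T (N+1) = none := by
      rw [walk_succ, hwN]
      simp only [Option.bind_some]
      have hcc : col c₁ c₀ N = c₁ := by
        have hNe : N % 2 = 0 := by
          by_contra hh
          have hc1 : col c₀ c₁ N = c₁ := by unfold col; rw [if_neg hh]
          rw [hc1] at hcolN; exact hne hcolN.symm
        unfold col; rw [if_pos hNe]
      rw [hcc]; exact hs
    rw [← hxT] at hwN hwN1
    exact ⟨N, hwN, hwN1⟩
  obtain ⟨N₁, hw1, hw1'⟩ := key s₁ hs₁ h1 hu1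
  obtain ⟨N₂, hw2, hw2'⟩ := key s₂ hs₂ h2 hu2
  have hNN : N₁ = N₂ := by
    by_contra hh
    rcases Nat.lt_or_ge N₁ N₂ with h | h
    · rw [walk_none_le (show N₁+1 ≤ N₂ by omega) hw1'] at hw2; exact absurd hw2 (by simp)
    · rw [walk_none_le (show N₂+1 ≤ N₁ by omega) hw2'] at hw1; exact absurd hw1 (by simp)
  rw [hNN, hw2] at hw1
  exact (Option.some.inj hw1).symm

end walk2
section fan
variable {k : ℕ} {w : V → V → ℕ}

lemma miss_lower {f : Fin k → V → Option V} (hf : Inv w f) (x : V) :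
    k ≤ (univ.filter fun i => f i x = none).card + ∑ y, w x y := by
  have h1 := missing_card f hf.symm x
  have h2 : ∑ y, cnt f x y ≤ ∑ y, w x y := Finset.sum_le_sum (fun y _ => hf.le x y)
  omega

lemma miss_lower_slot {f : Fin k → V → Option V} (hf : Inv w f) {x u' : V}
    (hslot : cnt f x u' < w x u') :
    k + 1 ≤ (univ.filter fun i => f i x = none).card + ∑ y, w x y := by
  have h1 := missing_card f hf.symm x
  have h2 : ∑ y, cnt f x y < ∑ y, w x y :=
    Finset.sum_lt_sum (fun y _ => hf.le x y) ⟨u', mem_univ u', hslot⟩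
  omega

structure IsFan (w : V → V → ℕ) (f : Fin k → V → Option V) (u : V)
    (vs : ℕ → V) (cs : ℕ → Fin k) (js : ℕ → ℕ) (n : ℕ) : Prop where
  inj : ∀ a, a ≤ n → ∀ b, b ≤ n → vs a = vs b → a = b
  slot : cnt f u (vs 0) < w u (vs 0)
  hjs : ∀ a, 1 ≤ a → a ≤ n → js a < a
  edge : ∀ a, 1 ≤ a → a ≤ n → f (cs a) u = some (vs a)
  free : ∀ a, 1 ≤ a → a ≤ n → f (cs a) (vs (js a)) = none

lemma fan_ne_u (hloop : ∀ v, w v v = 0) {f : Fin k → V → Option V} (hf : Inv w f)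
    {u : V} {vs cs js n} (hF : IsFan w f u vs cs js n) :
    ∀ a, a ≤ n → vs a ≠ u := by
  intro a ha h
  match a with
  | 0 =>
    have h1 := hF.slot
    rw [h, hloop] at h1
    omega
  | a+1 =>
    have h1 := hF.edge (a+1) (by omega) ha
    rw [h] at h1
    exact hf.irrefl hloop _ _ h1

lemma chain_ex {f : Fin k → V → Option V} {u : V} {vs cs js n}
    (hF : IsFan w f u vs cs js n) :
    ∀ l, l ≤ n → ∃ L : List (Fin k × V), Reach w f u L (vs l) ∧
      (∀ pr ∈ L, ∃ m, 1 ≤ m ∧ m ≤ l ∧ pr = (cs m, vs (js m))) ∧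
      (L.map Prod.fst).Nodup := by
  intro l
  induction l using Nat.strong_induction_on with
  | _ l IH =>
    intro hl
    match l with
    | 0 =>
      refine ⟨[], ?_, by simp, by simp⟩
      exact hF.slot
    | l+1 =>
      have hjl : js (l+1) < l + 1 := hF.hjs (l+1) (by omega) hl
      obtain ⟨L', hR', hmem', hnd'⟩ := IH (js (l+1)) hjl (by omega)
      refine ⟨(cs (l+1), vs (js (l+1))) :: L', ?_, ?_, ?_⟩
      · exact ⟨hF.edge (l+1) (by omega) hl, hF.free (l+1) (by omega) hl, hR'⟩
      · intro pr hpr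
        rcases List.mem_cons.mp hpr with h | h
        · exact ⟨l+1, by omega, le_rfl, h⟩
        · obtain ⟨m, hm1, hm2, hm3⟩ := hmem' pr h
          exact ⟨m, hm1, by omega, hm3⟩
      · rw [List.map_cons, List.nodup_cons]
        refine ⟨?_, hnd'⟩
        intro hmm
        obtain ⟨pr, hpr, hfst⟩ := List.mem_map.mp hmm
        obtain ⟨m, hm1, hm2, hm3⟩ := hmem' pr hpr
        rw [hm3] at hfst
        have hfst' : cs m = cs (l+1) := hfst
        have he1 : f (cs m) u = some (vs m) :=
          hF.edge m hm1 (by omega)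
        have he2 : f (cs (l+1)) u = some (vs (l+1)) := hF.edge (l+1) (by omega) hl
        rw [hfst', he2] at he1
        have := hF.inj (l+1) hl m (by omega) (Option.some.inj he1)
        omega

variable {D mu : ℕ}

lemma fanStep (hwsymm : ∀ a b, w a b = w b a) (hloop : ∀ v, w v v = 0)
    (hdeg : ∀ x, ∑ y, w x y ≤ D) (hmu : ∀ x y, w x y ≤ mu) (hkD : D + mu ≤ k) :
    ∀ (fuel n : ℕ) (f : Fin k → V → Option V) (u : V) (vs : ℕ → V)
      (cs : ℕ → Fin k) (js : ℕ → ℕ), Inv w f → IsFan w f u vs cs js n →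
      Fintype.card V ≤ fuel + n + 1 →
      ∃ f' : Fin k → V → Option V, Inv w f' ∧ Ndef w f' < Ndef w f := by
  intro fuel
  induction fuel with
  | zero =>
    intro n f u vs cs js hf hF hcard
    exfalso
    have hinj : Set.InjOn vs (Finset.range (n+1)) := by
      intro a ha b hb h
      simp only [Finset.coe_range, Set.mem_Iio] at ha hb
      exact hF.inj a (by omega) b (by omega) h
    have h1 : ((Finset.range (n+1)).image vs).card = n + 1 := by
      rw [Finset.card_image_of_injOn hinj, Finset.card_range]
    have hu : u ∉ (Finset.range (n+1)).image vs := by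
      intro h
      obtain ⟨a, ha, hva⟩ := Finset.mem_image.mp h
      exact fan_ne_u hloop hf hF a (by have := Finset.mem_range.mp ha; omega) hva
    have h2 : (insert u ((Finset.range (n+1)).image vs)).card = n + 2 := by
      rw [Finset.card_insert_of_notMem hu, h1]
    have h3 := Finset.card_le_univ (insert u ((Finset.range (n+1)).image vs))
    rw [h2] at h3
    omega
  | succ fuel IH =>
    intro n f u vs cs js hf hF hcard
    classical
    by_cases hwin : ∃ l, l ≤ n ∧ ∃ γ : Fin k, f γ (vs l) = none ∧ f γ u = none
    · obtain ⟨l, hl, γ, h1, h2⟩ := hwin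
      obtain ⟨L, hR, _, hnd⟩ := chain_ex hF l hl
      exact rot hwsymm hloop L f hf u (vs l) γ h2 h1 hnd hR
    by_cases hext : ∃ l, l ≤ n ∧ ∃ γ : Fin k, f γ (vs l) = none ∧
        ∃ x, f γ u = some x ∧ ∀ m, m ≤ n → x ≠ vs m
    · obtain ⟨l, hl, γ, h1, x, h2, h3⟩ := hext
      refine IH (n+1) f u (fun m => if m = n+1 then x else vs m)
        (fun m => if m = n+1 then γ else cs m) (fun m => if m = n+1 then l else js m)
        hf ?_ (by omega)
      constructor
      · intro a ha b hb hab
        by_cases ha1 : a = n+1 <;> by_cases hb1 : b = n+1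
        · omega
        · rw [if_pos ha1, if_neg hb1] at hab
          exact absurd hab (h3 b (by omega))
        · rw [if_neg ha1, if_pos hb1] at hab
          exact absurd hab.symm (h3 a (by omega))
        · rw [if_neg ha1, if_neg hb1] at hab
          exact hF.inj a (by omega) b (by omega) hab
      · have h0 : (0:ℕ) ≠ n+1 := by omega
        rw [if_neg h0]
        exact hF.slot
      · intro a ha1 ha2
        by_cases ha : a = n+1
        · rw [if_pos ha]; omega
        · rw [if_neg ha]
          have := hF.hjs a ha1 (by omega)
          omega
      · intro a ha1 ha2
        by_cases ha : a = n+1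
        · rw [if_pos ha, if_pos ha]
          exact h2
        · rw [if_neg ha, if_neg ha]
          exact hF.edge a ha1 (by omega)
      · intro a ha1 ha2
        by_cases ha : a = n+1
        · have hjla : (if a = n+1 then l else js a) = l := if_pos ha
          rw [if_pos ha, hjla, if_neg (show l ≠ n+1 by omega)]
          exact h1
        · have hja : (if a = n+1 then l else js a) = js a := if_neg ha
          rw [if_neg ha, hja]
          have hj := hF.hjs a ha1 (by omega)
          rw [if_neg (show js a ≠ n+1 by omega)]
          exact hF.free a ha1 (by omega)
    · -- stuck case: counting + Kempe chain
      push_neg at hwin hext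
      set Mset : ℕ → Finset (Fin k) := fun l => univ.filter (fun γ => f γ (vs l) = none)
        with hMset
      set S : Finset (Fin k) :=
        univ.filter (fun γ => ∃ m, m ≤ n ∧ f γ u = some (vs m)) with hS
      have hsub : ∀ l, l ≤ n → Mset l ⊆ S := by
        intro l hl γ hγ
        simp only [hMset] at hγ
        simp only [Finset.mem_filter, Finset.mem_univ, true_and] at hγ
        cases hfγ : f γ u with
        | none => exact absurd hfγ (hwin l hl γ hγ)
        | some x =>
          obtain ⟨m, hm, hxm⟩ := hext l hl γ hγ x hfγ
          simp only [hS, Finset.mem_filter, Finset.mem_univ, true_and]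
          exact ⟨m, hm, by rw [hfγ, hxm]⟩
      have hScard : S.card ≤ ∑ m ∈ Finset.range (n+1), cnt f u (vs m) := by
        have hSsub : S ⊆ (Finset.range (n+1)).biUnion
            (fun m => univ.filter (fun γ => f γ u = some (vs m))) := by
          intro γ hγ
          simp only [hS] at hγ
          simp only [Finset.mem_filter, Finset.mem_univ, true_and] at hγ
          obtain ⟨m, hm, he⟩ := hγ
          exact Finset.mem_biUnion.mpr ⟨m, Finset.mem_range.mpr (by omega),
            Finset.mem_filter.mpr ⟨mem_univ _, he⟩⟩
        have hc1 := Finset.card_le_card hSsub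
        have hc2 : ((Finset.range (n+1)).biUnion
              (fun m => univ.filter (fun γ => f γ u = some (vs m)))).card ≤
            ∑ m ∈ Finset.range (n+1), (univ.filter (fun γ => f γ u = some (vs m))).card :=
          Finset.card_biUnion_le
        have hc4 : ∑ m ∈ Finset.range (n+1), (univ.filter (fun γ => f γ u = some (vs m))).card
            = ∑ m ∈ Finset.range (n+1), cnt f u (vs m) :=
          Finset.sum_congr rfl (fun m _ => (cnt_card f u (vs m)).symm)
        omega
      have hSw : ∑ m ∈ Finset.range (n+1), cnt f u (vs m) + 1 ≤
          ∑ m ∈ Finset.range (n+1), w u (vs m) := by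
        refine Nat.succ_le_of_lt ?_
        exact Finset.sum_lt_sum (fun m _ => hf.le u (vs m))
          ⟨0, Finset.mem_range.mpr (by omega), hF.slot⟩
      have hwsum : ∑ m ∈ Finset.range (n+1), w u (vs m) ≤ (n+1) * mu := by
        have := Finset.sum_le_card_nsmul (Finset.range (n+1)) (fun m => w u (vs m)) mu
          (fun m _ => hmu u (vs m))
        simpa [Finset.card_range, smul_eq_mul] using this
      by_cases hdis : ∀ p, p ≤ n → ∀ t, t ≤ n → p ≠ t → Disjoint (Mset p) (Mset t)
      · exfalso
        have hcard : ∑ l ∈ Finset.range (n+1), (Mset l).card =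
            ((Finset.range (n+1)).biUnion Mset).card := by
          rw [Finset.card_biUnion]
          intro p hp t ht hpt
          exact hdis p (by have := Finset.mem_range.mp hp; omega) t
            (by have := Finset.mem_range.mp ht; omega) hpt
        have hUS : (Finset.range (n+1)).biUnion Mset ⊆ S := by
          intro γ hγ
          obtain ⟨l, hl, hγl⟩ := Finset.mem_biUnion.mp hγ
          exact hsub l (by have := Finset.mem_range.mp hl; omega) hγl
        have hlow : ∀ l, l ≤ n → mu ≤ (Mset l).card := by
          intro l hl
          have h1 := miss_lower hf (vs l)
          have h2 := hdeg (vs l)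
          simp only [hMset]
          omega
        have hlow0 : mu + 1 ≤ (Mset 0).card := by
          have hslot0 : cnt f (vs 0) u < w (vs 0) u := by
            rw [cnt_symm hf.symm, hwsymm (vs 0) u]
            exact hF.slot
          have h1 := miss_lower_slot hf hslot0
          have h2 := hdeg (vs 0)
          simp only [hMset]
          omega
        have hsum_low : n * mu + (mu + 1) ≤ ∑ l ∈ Finset.range (n+1), (Mset l).card := by
          rw [Finset.sum_range_succ']
          have h1 : n * mu ≤ ∑ i ∈ Finset.range n, (Mset (i+1)).card := by
            have := Finset.card_nsmul_le_sum (Finset.range n) (fun i => (Mset (i+1)).card)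
              mu (fun i hi => hlow (i+1) (by have := Finset.mem_range.mp hi; omega))
            simpa [Finset.card_range, smul_eq_mul] using this
          omega
        have hfin := Finset.card_le_card hUS
        have hmul : (n+1) * mu = n * mu + mu := by ring
        omega
      · push_neg at hdis
        obtain ⟨p, hp, t, ht, hpt, hndis⟩ := hdis
        obtain ⟨β, hβp', hβt'⟩ := Finset.not_disjoint_iff.mp hndis
        rw [hMset] at hβp' hβt'
        simp only [Finset.mem_filter, Finset.mem_univ, true_and] at hβp' hβt'
        have hβu : f β u ≠ none := fun h => hwin p hp β hβp' h
        have hαex : ∃ α : Fin k, f α u = none := by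
          have h1 := miss_lower_slot hf hF.slot
          have h2 := hdeg u
          have h3 : (univ.filter fun i => f i u = none).Nonempty := by
            rw [← Finset.card_pos]
            omega
          obtain ⟨α, hα⟩ := h3
          simp only [Finset.mem_filter, Finset.mem_univ, true_and] at hα
          exact ⟨α, hα⟩
        obtain ⟨α, hα⟩ := hαex
        have hαβ : α ≠ β := fun h => hβu (h ▸ hα)
        have hirr : ∀ i x, f i x ≠ some x := fun i x => hf.irrefl hloop i x
        have hune : ∀ a, a ≤ n → u ≠ vs a := fun a ha h =>
          (fan_ne_u hloop hf hF a ha) h.symm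
        -- B₀ : fan indices l with β missing at vs l and u not in the walk-trace of vs l
        set B₀ : Finset ℕ := (Finset.range (n+1)).filter
          (fun l => f β (vs l) = none ∧ ¬ ∃ n', walk f α β (vs l) n' = some u) with hB₀
        have hB₀ne : B₀.Nonempty := by
          by_contra hh
          rw [Finset.not_nonempty_iff_eq_empty] at hh
          have hmem : ∀ l, l ≤ n → f β (vs l) = none →
              ∃ n', walk f α β (vs l) n' = some u := by
            intro l hl hβl
            by_contra hc
            have : l ∈ B₀ := by
              rw [hB₀]
              exact Finset.mem_filter.mpr ⟨Finset.mem_range.mpr (by omega), hβl, hc⟩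
            rw [hh] at this
            exact absurd this (Finset.notMem_empty l)
          have h1 := hmem p hp hβp'
          have h2 := hmem t ht hβt'
          have := term_unique hf.symm hirr hαβ hβp' hβt' hα h1 h2
            (hune p hp) (hune t ht)
          exact hpt (hF.inj p hp t ht this)
        set t₀ := B₀.min' hB₀ne with ht₀
        have ht₀mem : t₀ ∈ B₀ := Finset.min'_mem B₀ hB₀ne
        have ht₀n : t₀ ≤ n := by
          rw [hB₀] at ht₀mem
          have h1 := Finset.mem_range.mp (Finset.mem_filter.mp ht₀mem).1
          omega
        have hβt₀ : f β (vs t₀) = none := (Finset.mem_filter.mp (hB₀ ▸ ht₀mem)).2.1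
        have hut₀ : ¬ ∃ n', walk f α β (vs t₀) n' = some u :=
          (Finset.mem_filter.mp (hB₀ ▸ ht₀mem)).2.2
        set C : V → Prop := fun x => ∃ n', walk f α β (vs t₀) n' = some x with hC
        obtain ⟨NN, TT, hTT, hNN1⟩ := walk_term hf.symm hirr hαβ hβt₀
        have hclosure : ∀ x y, C x → (f α x = some y ∨ f β x = some y) → C y := by
          intro x y hx hxy
          exact walk_closed hf.symm hαβ hβt₀ hTT hNN1 hx hxy
        obtain ⟨hf₂, hcnt₂⟩ := swap_spec hf hαβ hclosure
        have huC : ¬ C u := hut₀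
        have hαu₂ : swapFn f α β C α u = none := by
          unfold swapFn
          rw [if_pos rfl, if_neg huC]
          exact hα
        have hvt₀C : C (vs t₀) := ⟨0, walk_zero⟩
        have hαt₂ : swapFn f α β C α (vs t₀) = none := by
          unfold swapFn
          rw [if_pos rfl, if_pos hvt₀C]
          exact hβt₀
        obtain ⟨L, hR, hmemL, hnd⟩ := chain_ex hF t₀ ht₀n
        have hReach2 : ∀ (L' : List (Fin k × V)) (y : V),
            (∀ pr ∈ L', ∃ m, 1 ≤ m ∧ m ≤ t₀ ∧ pr = (cs m, vs (js m))) →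
            Reach w f u L' y → Reach w (swapFn f α β C) u L' y := by
          intro L'
          induction L' with
          | nil =>
            intro y _ hR0
            have h1 : cnt f u y < w u y := hR0
            show cnt (swapFn f α β C) u y < w u y
            rw [hcnt₂]
            exact h1
          | cons hd L'' ihL =>
            obtain ⟨c, z⟩ := hd
            intro y hmem' hR0
            obtain ⟨h1, h2, h3⟩ := hR0
            obtain ⟨m, hm1, hmt, hpr⟩ := hmem' (c, z) List.mem_cons_self
            have hcm : c = cs m := congrArg Prod.fst hpr
            have hzm : z = vs (js m) := congrArg Prod.snd hpr
            have hcα : c ≠ α := fun h => by rw [h, hα] at h1; exact absurd h1 (by simp)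
            refine ⟨?_, ?_, ihL z ?_ h3⟩
            · by_cases hcβ : c = β
              · rw [hcβ] at h1 ⊢
                show swapFn f α β C β u = some y
                unfold swapFn
                rw [if_neg (Ne.symm hαβ), if_pos rfl, if_neg huC]
                exact h1
              · show swapFn f α β C c u = some y
                unfold swapFn
                rw [if_neg hcα, if_neg hcβ]
                exact h1
            · by_cases hcβ : c = β
              · have hz : ¬ C z := by
                  intro hzC
                  have hjm : js m < m := hF.hjs m hm1 (by omega)
                  have hjmn : js m ≤ n := by omega
                  have hzne : vs (js m) ≠ vs t₀ := by
                    intro h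
                    have := hF.inj (js m) hjmn t₀ ht₀n h
                    omega
                  rw [hcβ] at h2
                  have hβz : f β (vs (js m)) = none := hzm ▸ h2
                  have hiff := trace_swap_start hf.symm hirr hαβ hβt₀ hβz
                    (hzm ▸ hzC) hzne
                  have hjmB : js m ∈ B₀ := by
                    rw [hB₀]
                    refine Finset.mem_filter.mpr ⟨Finset.mem_range.mpr (by omega), hβz, ?_⟩
                    intro hcu
                    exact hut₀ ((hiff u).mp hcu)
                  have := Finset.min'_le B₀ (js m) hjmB
                  omega
                rw [hcβ] at h2 ⊢
                show swapFn f α β C β z = none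
                unfold swapFn
                rw [if_neg (Ne.symm hαβ), if_pos rfl, if_neg hz]
                exact h2
              · show swapFn f α β C c z = none
                unfold swapFn
                rw [if_neg hcα, if_neg hcβ]
                exact h2
            · intro pr hpr'
              exact hmem' pr (List.mem_cons_of_mem _ hpr')
        obtain ⟨f', hf', hN⟩ := rot hwsymm hloop L (swapFn f α β C) hf₂ u (vs t₀) α
          hαu₂ hαt₂ hnd (hReach2 L (vs t₀) hmemL hR)
        exact ⟨f', hf', hN.trans_eq (Ndef_eq_of_cnt_eq hcnt₂)⟩

end fan
section assemble
variable {k : ℕ} {w : V → V → ℕ} {D mu : ℕ}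

lemma colorAll (hwsymm : ∀ a b, w a b = w b a) (hloop : ∀ v, w v v = 0)
    (hdeg : ∀ x, ∑ y, w x y ≤ D) (hmu : ∀ x y, w x y ≤ mu) (hkD : D + mu ≤ k) :
    ∃ f : Fin k → V → Option V, Inv w f ∧ ∀ u v, cnt f u v = w u v := by
  have step : ∀ (f : Fin k → V → Option V), Inv w f →
      (∃ u v, cnt f u v < w u v) →
      ∃ f' : Fin k → V → Option V, Inv w f' ∧ Ndef w f' < Ndef w f := by
    intro f hf hex
    obtain ⟨u, v, hslot⟩ := hex
    have hk1 : 1 ≤ k := by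
      have h1 := hmu u v
      omega
    exact fanStep hwsymm hloop hdeg hmu hkD (Fintype.card V) 0 f u (fun _ => v)
      (fun _ => ⟨0, by omega⟩) (fun _ => 0) hf
      ⟨fun a ha b hb _ => by omega, hslot,
       fun a ha hb => absurd hb (by omega),
       fun a ha hb => absurd hb (by omega),
       fun a ha hb => absurd hb (by omega)⟩ (by omega)
  have main : ∀ m (f : Fin k → V → Option V), Inv w f → Ndef w f ≤ m →
      ∃ g : Fin k → V → Option V, Inv w g ∧ ∀ u v, cnt g u v = w u v := by
    intro m
    induction m with
    | zero =>
      intro f hf hN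
      refine ⟨f, hf, fun u v => ?_⟩
      by_contra hne
      have h1 : cnt f u v < w u v := lt_of_le_of_ne (hf.le u v) hne
      have h2 : 1 ≤ Ndef w f := by
        unfold Ndef
        have hmem : (u, v) ∈ (univ ×ˢ univ : Finset (V × V)) := by simp
        have h3 : w u v - cnt f u v ≤
            ∑ p ∈ univ ×ˢ (univ : Finset V), (w p.1 p.2 - cnt f p.1 p.2) :=
          Finset.single_le_sum (f := fun p : V × V => w p.1 p.2 - cnt f p.1 p.2)
            (fun p _ => Nat.zero_le _) hmem
        omega
      omega
    | succ m ih =>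
      intro f hf hN
      by_cases hslot : ∃ u v, cnt f u v < w u v
      · obtain ⟨f', hf', hN'⟩ := step f hf hslot
        exact ih f' hf' (by omega)
      · push_neg at hslot
        exact ⟨f, hf, fun u v => le_antisymm (hf.le u v) (hslot u v)⟩
  refine main (Ndef w (fun _ _ => none)) (fun _ _ => none)
    ⟨fun i u v h => absurd h (by simp), fun u v => by simp [cnt]⟩ le_rfl

end assemble

end MGColor

/-- A proper `k`-edge-coloring of the loopless multigraph with multiplicity function `w`:
a family of matchings (one per color, given as symmetric boolean relations in which every
vertex has at most one partner) such that each edge-multiplicity `w u v` equals the number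
of colors joining `u` and `v`. -/
def IsProperEdgeColoringMG {V : Type} [Fintype V] [DecidableEq V]
    (w : V → V → ℕ) (k : ℕ) (M : Fin k → V → V → Bool) : Prop :=
  (∀ i u v, M i u v = M i v u) ∧
  (∀ i u, (Finset.univ.filter fun v => M i u v = true).card ≤ 1) ∧
  (∀ u v, w u v = (Finset.univ.filter fun i => M i u v = true).card)

/-- Gupta, Vizing: every loopless multigraph admits a proper edge-coloring
with `Δ + μ` colors, where `Δ` is the maximum degree and `μ` the maximum multiplicity. -/
theorem multigraph_edge_coloring_maxDegree_add_multiplicity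
    {V : Type} [Fintype V] [DecidableEq V]
    (w : V → V → ℕ) (hsymm : ∀ u v, w u v = w v u) (hloop : ∀ v, w v v = 0) :
    ∃ M : Fin ((Finset.univ.sup fun v => ∑ u, w v u) +
        Finset.univ.sup fun p : V × V => w p.1 p.2) → V → V → Bool,
      IsProperEdgeColoringMG w _ M := by
  classical
  obtain ⟨f, hf, hcnt⟩ := MGColor.colorAll (w := w)
    (k := (Finset.univ.sup fun v => ∑ u, w v u) +
      Finset.univ.sup fun p : V × V => w p.1 p.2)
    (D := Finset.univ.sup fun v => ∑ u, w v u)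
    (mu := Finset.univ.sup fun p : V × V => w p.1 p.2)
    hsymm hloop
    (fun x => Finset.le_sup (f := fun v => ∑ u, w v u) (Finset.mem_univ x))
    (fun x y => Finset.le_sup (f := fun p : V × V => w p.1 p.2) (Finset.mem_univ (x, y)))
    le_rfl
  refine ⟨fun i u v => decide (f i u = some v), ?_, ?_, ?_⟩
  · intro i u v
    exact decide_eq_decide.mpr ⟨fun h => hf.symm i u v h, fun h => hf.symm i v u h⟩
  · intro i u
    cases h : f i u with
    | none =>
      have he : (Finset.univ.filter fun v => decide (f i u = some v) = true) = ∅ := by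
        ext v
        simp [h]
      rw [he]
      simp
    | some y =>
      have hsub : (Finset.univ.filter fun v => decide (f i u = some v) = true) ⊆ {y} := by
        intro v hv
        simp only [Finset.mem_filter, decide_eq_true_eq] at hv
        rw [h] at hv
        simp [Option.some.inj hv.2]
      exact le_trans (Finset.card_le_card hsub) (by simp)
  · intro u v
    rw [← hcnt u v, MGColor.cnt_card]
    congr 1
    ext i
    simp
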